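/- Let n : ℕ and work with the index type Fin n ⊕ Fin 2. Let G : Matrix (Fin n ⊕ Fin 2) (Fin n ⊕ Fin 2) ℤ be the block diagonal matrix that is zero on the Fin n block, zero on the mixed blocks, and equal to the hyperbolic matrix J (J (inr 0) (inr 1) = J (inr 1) (inr 0) = 1, J (inr 0) (inr 0) = J (inr 1) (inr 1) = 0) on the Fin 2 block; let G₂ be its reduction mod 2. Suppose P is an invertible matrix over ZMod 2 of this size with Pᵀ * G₂ * P = G₂, and suppose the 2×2 block of P indexed by Fin 2 × Fin 2 is the identity or the swap matrix. Then there exists a matrix Q over ℤ, invertible over ℤ (its determinant is a unit), with Qᵀ * G * Q = G and whose reduction mod 2 equals P. -/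
import Mathlib

open Matrix

/-- The Gram matrix of the form `0^{⊕n} ⊕ H` on the index type `Fin n ⊕ Fin 2`:
zero on the `Fin n` block and on the mixed blocks, hyperbolic on the `Fin 2` block. -/
def Gmat (n : ℕ) : Matrix (Fin n ⊕ Fin 2) (Fin n ⊕ Fin 2) ℤ :=
  Matrix.fromBlocks 0 0 0 !![0, 1; 1, 0]

lemma zmod2_cast_val (x : ZMod 2) : ((x.val : ℤ) : ZMod 2) = x := by
  push_cast
  exact ZMod.natCast_rightInverse x

lemma lift_gl {m : Type*} [DecidableEq m] [Fintype m]
    (A : Matrix m m (ZMod 2)) (hA : A.det ≠ 0) :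
    ∃ A' : Matrix m m ℤ, IsUnit A'.det ∧ A'.map (Int.cast : ℤ → ZMod 2) = A := by
  refine Matrix.diagonal_transvection_induction_of_det_ne_zero
    (fun N => ∃ A' : Matrix m m ℤ, IsUnit A'.det ∧ A'.map (Int.cast : ℤ → ZMod 2) = N)
    A hA ?_ ?_ ?_
  · intro D hD
    have hD1 : ∀ i, D i = 1 := by
      intro i
      have hne : D i ≠ 0 := by
        intro h
        exact hD (by rw [det_diagonal]; exact Finset.prod_eq_zero (Finset.mem_univ i) h)
      exact (by decide : ∀ x : ZMod 2, x ≠ 0 → x = 1) _ hne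
    have hd : Matrix.diagonal D = 1 := by
      rw [show D = fun _ => 1 from funext hD1, Matrix.diagonal_one]
    refine ⟨1, by simp, ?_⟩
    rw [hd]
    ext i j
    by_cases h : i = j <;> simp [Matrix.one_apply, h]
  · rintro ⟨i, j, hij, c⟩
    refine ⟨Matrix.transvection i j (c.val : ℤ),
      by simp [Matrix.det_transvection_of_ne i j hij], ?_⟩
    rw [TransvectionStruct.toMatrix_mk]
    ext a b
    simp [Matrix.transvection, Matrix.one_apply, Matrix.single, zmod2_cast_val]
  · rintro M N hM hN ⟨M', hM', hMm⟩ ⟨N', hN', hNm⟩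
    refine ⟨M' * N', by rw [Matrix.det_mul]; exact hM'.mul hN', ?_⟩
    rw [show (Int.cast : ℤ → ZMod 2) = ⇑(Int.castRingHom (ZMod 2)) from rfl,
      Matrix.map_mul]
    rw [show ⇑(Int.castRingHom (ZMod 2)) = (Int.cast : ℤ → ZMod 2) from rfl, hMm, hNm]

lemma triple_apply {R : Type*} [CommRing R] {n : ℕ}
    (M : Matrix (Fin n ⊕ Fin 2) (Fin n ⊕ Fin 2) R) (x y : Fin n ⊕ Fin 2) :
    (Mᵀ * (fromBlocks 0 0 0 !![0,(1:R);1,0] : Matrix (Fin n ⊕ Fin 2) (Fin n ⊕ Fin 2) R) * M) x y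
      = M (Sum.inr 0) x * M (Sum.inr 1) y + M (Sum.inr 1) x * M (Sum.inr 0) y := by
  rw [Matrix.mul_assoc]
  simp [Matrix.mul_apply, Fintype.sum_sum_type, Fin.sum_univ_two, Finset.mul_sum]

theorem stmt11 (n : ℕ)
    (P : Matrix (Fin n ⊕ Fin 2) (Fin n ⊕ Fin 2) (ZMod 2))
    (hPinv : IsUnit P.det)
    (hiso : Pᵀ * (Gmat n).map (Int.cast : ℤ → ZMod 2) * P
      = (Gmat n).map (Int.cast : ℤ → ZMod 2))
    (hblock : P.submatrix Sum.inr Sum.inr = (1 : Matrix (Fin 2) (Fin 2) (ZMod 2)) ∨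
      P.submatrix Sum.inr Sum.inr = !![0, 1; 1, 0]) :
    ∃ Q : Matrix (Fin n ⊕ Fin 2) (Fin n ⊕ Fin 2) ℤ,
      IsUnit Q.det ∧ Qᵀ * Gmat n * Q = Gmat n ∧
      Q.map (Int.cast : ℤ → ZMod 2) = P := by
  have hG2 : (Gmat n).map (Int.cast : ℤ → ZMod 2)
      = (fromBlocks 0 0 0 !![0,1;1,0] : Matrix (Fin n ⊕ Fin 2) (Fin n ⊕ Fin 2) (ZMod 2)) := by
    ext x y
    rcases x with i | i <;> rcases y with j | j <;>
      simp [Gmat, Matrix.fromBlocks, Matrix.map_apply]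
    fin_cases i <;> fin_cases j <;> simp
  rw [hG2] at hiso
  have key : ∀ x y, P (Sum.inr 0) x * P (Sum.inr 1) y + P (Sum.inr 1) x * P (Sum.inr 0) y
      = (fromBlocks 0 0 0 !![0,1;1,0] : Matrix (Fin n ⊕ Fin 2) (Fin n ⊕ Fin 2) (ZMod 2)) x y := by
    intro x y
    rw [← triple_apply P x y, hiso]
  -- the first column block of P vanishes
  have hC0 : ∀ k : Fin n, P (Sum.inr 0) (Sum.inl k) = 0 := by
    intro k
    rcases hblock with h1 | h1
    · have e11 : P (Sum.inr 1) (Sum.inr 1) = 1 := by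
        have := congrFun (congrFun h1 1) 1; simpa [Matrix.one_apply] using this
      have e01 : P (Sum.inr 0) (Sum.inr 1) = 0 := by
        have := congrFun (congrFun h1 0) 1; simpa [Matrix.one_apply] using this
      have := key (Sum.inl k) (Sum.inr 1)
      simpa [Matrix.fromBlocks, e11, e01] using this
    · have e10 : P (Sum.inr 1) (Sum.inr 0) = 1 := by
        have := congrFun (congrFun h1 1) 0; simpa using this
      have e00 : P (Sum.inr 0) (Sum.inr 0) = 0 := by
        have := congrFun (congrFun h1 0) 0; simpa using this
      have := key (Sum.inl k) (Sum.inr 0)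
      simpa [Matrix.fromBlocks, e10, e00] using this
  have hC1 : ∀ k : Fin n, P (Sum.inr 1) (Sum.inl k) = 0 := by
    intro k
    rcases hblock with h1 | h1
    · have e00 : P (Sum.inr 0) (Sum.inr 0) = 1 := by
        have := congrFun (congrFun h1 0) 0; simpa [Matrix.one_apply] using this
      have e10 : P (Sum.inr 1) (Sum.inr 0) = 0 := by
        have := congrFun (congrFun h1 1) 0; simpa [Matrix.one_apply] using this
      have := key (Sum.inl k) (Sum.inr 0)
      simpa [Matrix.fromBlocks, e00, e10] using this
    · have e01 : P (Sum.inr 0) (Sum.inr 1) = 1 := by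
        have := congrFun (congrFun h1 0) 1; simpa using this
      have e11 : P (Sum.inr 1) (Sum.inr 1) = 0 := by
        have := congrFun (congrFun h1 1) 1; simpa using this
      have := key (Sum.inl k) (Sum.inr 1)
      simpa [Matrix.fromBlocks, e01, e11] using this
  -- block decomposition of P
  have hPb : P = fromBlocks (P.submatrix Sum.inl Sum.inl) (P.submatrix Sum.inl Sum.inr)
      0 (P.submatrix Sum.inr Sum.inr) := by
    ext x y
    rcases x with i | i <;> rcases y with j | j <;> simp [Matrix.fromBlocks]
    fin_cases i
    · exact hC0 j
    · exact hC1 j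
  have hdetA : (P.submatrix Sum.inl Sum.inl).det ≠ 0 := by
    have h := hPinv
    rw [hPb, Matrix.det_fromBlocks_zero₂₁] at h
    exact (isUnit_of_mul_isUnit_left h).ne_zero
  obtain ⟨A', hA'det, hA'map⟩ := lift_gl _ hdetA
  obtain ⟨D', hD'det, hD'iso, hD'map⟩ :
      ∃ D' : Matrix (Fin 2) (Fin 2) ℤ, IsUnit D'.det ∧
        (∀ i j : Fin 2, D' 0 i * D' 1 j + D' 1 i * D' 0 j = !![(0:ℤ),1;1,0] i j) ∧
        D'.map (Int.cast : ℤ → ZMod 2) = P.submatrix Sum.inr Sum.inr := by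
    rcases hblock with h1 | h1
    · refine ⟨1, by simp, ?_, ?_⟩
      · intro i j; fin_cases i <;> fin_cases j <;> simp [Matrix.one_apply]
      · rw [h1]; exact Matrix.map_one _ (by simp) (by simp)
    · refine ⟨!![0,1;1,0], ?_, ?_, ?_⟩
      · rw [Matrix.det_fin_two_of]; exact Int.isUnit_iff.mpr (by norm_num)
      · intro i j; fin_cases i <;> fin_cases j <;> simp
      · rw [h1]; ext i j; fin_cases i <;> fin_cases j <;> simp
  refine ⟨fromBlocks A' ((P.submatrix Sum.inl Sum.inr).map (fun x => (x.val : ℤ))) 0 D',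
    ?_, ?_, ?_⟩
  · rw [Matrix.det_fromBlocks_zero₂₁]
    exact hA'det.mul hD'det
  · ext x y
    rw [Gmat, triple_apply]
    rcases x with i | i <;> rcases y with j | j
    · simp [Matrix.fromBlocks]
    · simp [Matrix.fromBlocks]
    · simp [Matrix.fromBlocks]
    · simpa [Matrix.fromBlocks] using hD'iso i j
  · ext x y
    rcases x with i | i <;> rcases y with j | j
    · simpa [Matrix.fromBlocks, Matrix.map_apply] using congrFun (congrFun hA'map i) j
    · simp [Matrix.fromBlocks, Matrix.map_apply, zmod2_cast_val]
    · simp only [Matrix.map_apply, Matrix.fromBlocks_apply₂₁, Matrix.zero_apply, Int.cast_zero]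
      fin_cases i
      · exact (hC0 j).symm
      · exact (hC1 j).symm
    · simpa [Matrix.fromBlocks, Matrix.map_apply] using congrFun (congrFun hD'map i) j
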